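/- For every n ≥ 3, every reflexive symmetric interpolating relation on {0,...,n} is uniquely determined as the filler of its boundary: if R and R' are two such relations which agree on every subset obtained by restricting along each of the n+1 face inclusions δ_i : [n-1] → [n] (i.e., ξ⁻¹(R) = ξ⁻¹(R') for every injective monotone ξ : [n-1] → [n]), then R = R'. (Equivalently, the Catalan simplicial set is 2-coskeletal, stated at dimensions ≥ 3.) -/
import Mathlib


/-- for n ≥ 3, a reflexive symmetric interpolating relation on
{0,...,n} is determined by its restrictions along all injective monotone maps
[n-1] → [n] (the face maps): the Catalan simplicial set is 2-coskeletal in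
dimensions ≥ 3. -/
theorem stmt19 (n : ℕ) (hn : 3 ≤ n)
    (R R' : Fin (n+1) → Fin (n+1) → Prop)
    (hrefl : ∀ i, R i i) (hsymm : ∀ i j, R i j → R j i)
    (hint : ∀ i j k : Fin (n+1), i ≤ j → j ≤ k → R i k → R i j ∧ R j k)
    (hrefl' : ∀ i, R' i i) (hsymm' : ∀ i j, R' i j → R' j i)
    (hint' : ∀ i j k : Fin (n+1), i ≤ j → j ≤ k → R' i k → R' i j ∧ R' j k)
    (h : ∀ ξ : Fin n → Fin (n+1), Monotone ξ → Function.Injective ξ →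
      (fun p q => R (ξ p) (ξ q)) = (fun p q => R' (ξ p) (ξ q))) :
    R = R' := by
  funext i j
  -- find k distinct from i and j
  obtain ⟨k, hk⟩ : ∃ k : Fin (n+1), k ∉ ({i, j} : Finset (Fin (n+1))) := by
    have hcard : ({i, j} : Finset (Fin (n+1))).card < Fintype.card (Fin (n+1)) := by
      have : ({i, j} : Finset (Fin (n+1))).card ≤ 2 :=
        (Finset.card_insert_le _ _).trans (by simp)
      simp only [Fintype.card_fin]
      omega
    have : ({i, j} : Finset (Fin (n+1))) ≠ Finset.univ := fun he => by
      rw [he, Finset.card_univ] at hcard; exact lt_irrefl _ hcard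
    simpa [Finset.eq_univ_iff_forall] using this
  simp only [Finset.mem_insert, Finset.mem_singleton, not_or] at hk
  obtain ⟨p, hp⟩ := Fin.exists_succAbove_eq (Ne.symm hk.1)
  obtain ⟨q, hq⟩ := Fin.exists_succAbove_eq (Ne.symm hk.2)
  have := h (k.succAbove) (Fin.strictMono_succAbove k).monotone
    (Fin.succAbove_right_injective)
  have := congrFun (congrFun this p) q
  rw [hp, hq] at this
  exact this
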